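/- Let z, z' : [0, T) → ℝ be càdlàg functions with 0 ≤ z(0) ≤ z'(0) and z(t) − z(s) ≤ z'(t) − z'(s) for all 0 ≤ s ≤ t < T. Let (x, ℓ) and (x', ℓ') be the solutions of the one-dimensional Skorokhod problems for z and z' respectively. Then x(t) ≤ x'(t) for all t ∈ [0, T), and ℓ(t) − ℓ(s) ≥ ℓ'(t) − ℓ'(s) for all 0 ≤ s ≤ t < T. -/

import Mathlib

open Set Filter
open scoped ENNReal NNReal

/-- `z` is càdlàg on `[0, T)`. -/
def CadlagOn (T : ℝ≥0∞) (z : ℝ → ℝ) : Prop :=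
  ∀ t : ℝ, 0 ≤ t → ENNReal.ofReal t < T →
    ContinuousWithinAt z (Set.Ici t) t ∧
    (0 < t → ∃ l : ℝ, Filter.Tendsto z (nhdsWithin t (Set.Iio t)) (nhds l))

/-- A càdlàg function on `[0,T)` is bounded below on `[0,t]` for `t < T`. -/
lemma cadlag_bddBelow {T : ℝ≥0∞} {z : ℝ → ℝ} (hz : CadlagOn T z) {t : ℝ}
    (ht0 : 0 ≤ t) (htT : ENNReal.ofReal t < T) : BddBelow (z '' Set.Icc 0 t) := by
  have key : ∀ u : Set.Icc (0:ℝ) t, ∃ U : Set ℝ, IsOpen U ∧ (u:ℝ) ∈ U ∧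
      BddBelow (z '' (U ∩ Set.Icc 0 t)) := by
    rintro ⟨u, hu0, hut⟩
    have huT : ENNReal.ofReal u < T := lt_of_le_of_lt (ENNReal.ofReal_le_ofReal hut) htT
    obtain ⟨hrc, hll⟩ := hz u hu0 huT
    have h1 : z ⁻¹' Set.Ioi (z u - 1) ∈ nhdsWithin u (Set.Ici u) :=
      hrc (Ioi_mem_nhds (by linarith))
    obtain ⟨V, hVopen, hVu, hVsub⟩ := mem_nhdsWithin.mp h1
    rcases eq_or_lt_of_le hu0 with h0 | h0
    · refine ⟨V, hVopen, hVu, ⟨z u - 1, ?_⟩⟩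
      rintro y ⟨v, ⟨hvV, hv0, hvt⟩, rfl⟩
      exact le_of_lt (hVsub ⟨hvV, h0 ▸ hv0⟩)
    · obtain ⟨l, hl⟩ := hll h0
      have h2 : z ⁻¹' Set.Ioi (l - 1) ∈ nhdsWithin u (Set.Iio u) :=
        hl (Ioi_mem_nhds (by linarith))
      obtain ⟨W, hWopen, hWu, hWsub⟩ := mem_nhdsWithin.mp h2
      refine ⟨V ∩ W, hVopen.inter hWopen, ⟨hVu, hWu⟩, ⟨min (z u - 1) (l - 1), ?_⟩⟩
      rintro y ⟨v, ⟨⟨hvV, hvW⟩, hv0, hvt⟩, rfl⟩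
      rcases le_or_gt u v with h | h
      · exact le_trans (min_le_left _ _) (le_of_lt (hVsub ⟨hvV, h⟩))
      · exact le_trans (min_le_right _ _) (le_of_lt (hWsub ⟨hvW, h⟩))
  choose U hUopen hUmem hUbdd using key
  obtain ⟨s, hs⟩ := isCompact_Icc.elim_finite_subcover U hUopen
    (fun v hv => Set.mem_iUnion.mpr ⟨⟨v, hv⟩, hUmem _⟩)
  have hsub : z '' Set.Icc 0 t ⊆ ⋃ i ∈ s, z '' (U i ∩ Set.Icc 0 t) := by
    rintro y ⟨v, hv, rfl⟩
    obtain ⟨i, hi, hvi⟩ := Set.mem_iUnion₂.mp (hs hv)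
    exact Set.mem_iUnion₂.mpr ⟨i, hi, ⟨v, ⟨hvi, hv⟩, rfl⟩⟩
  exact BddBelow.mono hsub ((s.finite_toSet.bddBelow_biUnion).mpr fun i _ => hUbdd i)

/-- Comparison for the one-dimensional Skorokhod problem: if `z 0 ≤ z' 0` and the increments
of `z` are dominated by those of `z'`, then `x ≤ x'` and the increments of `ℓ'` are dominated
by those of `ℓ`, where `(x, ℓ)` and `(x', ℓ')` are the explicit Skorokhod solutions for
`z` and `z'`. -/
theorem skorokhod_comparison (T : ℝ≥0∞) (z z' : ℝ → ℝ)
    (hz : CadlagOn T z) (hz' : CadlagOn T z')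
    (hz00 : 0 ≤ z 0) (hz0le : z 0 ≤ z' 0)
    (hincr : ∀ s t : ℝ, 0 ≤ s → s ≤ t → ENNReal.ofReal t < T → z t - z s ≤ z' t - z' s)
    (ℓ x ℓ' x' : ℝ → ℝ)
    (hℓ : ∀ t : ℝ, 0 ≤ t → ENNReal.ofReal t < T →
      ℓ t = sSup ((fun u => max (-(z u)) 0) '' Set.Icc 0 t))
    (hx : ∀ t : ℝ, 0 ≤ t → ENNReal.ofReal t < T → x t = z t + ℓ t)
    (hℓ' : ∀ t : ℝ, 0 ≤ t → ENNReal.ofReal t < T →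
      ℓ' t = sSup ((fun u => max (-(z' u)) 0) '' Set.Icc 0 t))
    (hx' : ∀ t : ℝ, 0 ≤ t → ENNReal.ofReal t < T → x' t = z' t + ℓ' t) :
    (∀ t : ℝ, 0 ≤ t → ENNReal.ofReal t < T → x t ≤ x' t) ∧
    (∀ s t : ℝ, 0 ≤ s → s ≤ t → ENNReal.ofReal t < T → ℓ' t - ℓ' s ≤ ℓ t - ℓ s) := by
  set f : ℝ → ℝ := fun u => max (-(z u)) 0 with hf
  set f' : ℝ → ℝ := fun u => max (-(z' u)) 0 with hf'
  -- boundedness of the sup sets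
  have hA : ∀ t : ℝ, 0 ≤ t → ENNReal.ofReal t < T → BddAbove (f '' Set.Icc 0 t) := by
    intro t ht0 htT
    obtain ⟨m, hm⟩ := cadlag_bddBelow hz ht0 htT
    refine ⟨max (-m) 0, ?_⟩
    rintro y ⟨u, hu, rfl⟩
    have : m ≤ z u := hm ⟨u, hu, rfl⟩
    exact max_le_max (by linarith) le_rfl
  have hA' : ∀ t : ℝ, 0 ≤ t → ENNReal.ofReal t < T → BddAbove (f' '' Set.Icc 0 t) := by
    intro t ht0 htT
    obtain ⟨m, hm⟩ := cadlag_bddBelow hz' ht0 htT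
    refine ⟨max (-m) 0, ?_⟩
    rintro y ⟨u, hu, rfl⟩
    have : m ≤ z' u := hm ⟨u, hu, rfl⟩
    exact max_le_max (by linarith) le_rfl
  -- nonnegativity of the sups
  have hNN : ∀ t : ℝ, 0 ≤ t → ENNReal.ofReal t < T → 0 ≤ sSup (f '' Set.Icc 0 t) :=
    fun t ht0 htT => le_trans (le_max_right (-(z 0)) 0)
      (le_csSup (hA t ht0 htT) ⟨0, ⟨le_rfl, ht0⟩, rfl⟩)
  have hNN' : ∀ t : ℝ, 0 ≤ t → ENNReal.ofReal t < T → 0 ≤ sSup (f' '' Set.Icc 0 t) :=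
    fun t ht0 htT => le_trans (le_max_right (-(z' 0)) 0)
      (le_csSup (hA' t ht0 htT) ⟨0, ⟨le_rfl, ht0⟩, rfl⟩)
  -- key estimate: ℓ t ≤ (z' t - z t) + ℓ' t
  have key1 : ∀ t : ℝ, 0 ≤ t → ENNReal.ofReal t < T →
      sSup (f '' Set.Icc 0 t) ≤ (z' t - z t) + sSup (f' '' Set.Icc 0 t) := by
    intro t ht0 htT
    have hd : 0 ≤ z' t - z t := by
      have := hincr 0 t le_rfl ht0 htT; linarith
    apply Real.sSup_le
    · rintro y ⟨u, ⟨hu0, hut⟩, rfl⟩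
      have hi := hincr u t hu0 hut htT
      have hfu : f u ≤ (z' t - z t) + f' u := by
        rcases le_total (-(z u)) 0 with h | h
        · have h1 : (0:ℝ) ≤ f' u := le_max_right _ _
          simp only [hf, max_eq_right h]
          linarith
        · have h1 : -(z' u) ≤ f' u := le_max_left _ _
          simp only [hf, max_eq_left h]
          linarith
      have h2 : f' u ≤ sSup (f' '' Set.Icc 0 t) :=
        le_csSup (hA' t ht0 htT) ⟨u, ⟨hu0, hut⟩, rfl⟩
      linarith
    · linarith [hNN' t ht0 htT]
  refine ⟨?_, ?_⟩
  · intro t ht0 htT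
    rw [hx t ht0 htT, hx' t ht0 htT, hℓ t ht0 htT, hℓ' t ht0 htT]
    have := key1 t ht0 htT
    linarith
  · intro s t hs0 hst htT
    have hsT : ENNReal.ofReal s < T := lt_of_le_of_lt (ENNReal.ofReal_le_ofReal hst) htT
    have ht0 : 0 ≤ t := hs0.trans hst
    rw [hℓ' t ht0 htT, hℓ' s hs0 hsT, hℓ t ht0 htT, hℓ s hs0 hsT]
    have hmono : sSup (f '' Set.Icc 0 s) ≤ sSup (f '' Set.Icc 0 t) :=
      csSup_le_csSup (hA t ht0 htT) ⟨f 0, ⟨0, ⟨le_rfl, hs0⟩, rfl⟩⟩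
        (Set.image_mono (Set.Icc_subset_Icc_right hst))
    have h1s := key1 s hs0 hsT
    have hNN's := hNN' s hs0 hsT
    have main : sSup (f' '' Set.Icc 0 t) ≤
        sSup (f '' Set.Icc 0 t) - sSup (f '' Set.Icc 0 s) + sSup (f' '' Set.Icc 0 s) := by
      apply Real.sSup_le
      · rintro y ⟨u, ⟨hu0, hut⟩, rfl⟩
        rcases le_total u s with h | h
        · have h2 : f' u ≤ sSup (f' '' Set.Icc 0 s) :=
            le_csSup (hA' s hs0 hsT) ⟨u, ⟨hu0, h⟩, rfl⟩
          linarith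
        · have huT : ENNReal.ofReal u < T := lt_of_le_of_lt (ENNReal.ofReal_le_ofReal hut) htT
          have hi := hincr s u hs0 h huT
          rcases le_total (-(z' u)) 0 with hc | hc
          · simp only [hf', max_eq_right hc]
            linarith
          · simp only [hf', max_eq_left hc]
            have h2 : -(z u) ≤ f u := le_max_left _ _
            have h3 : f u ≤ sSup (f '' Set.Icc 0 t) :=
              le_csSup (hA t ht0 htT) ⟨u, ⟨hu0, hut⟩, rfl⟩
            linarith
      · linarith
    linarith
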